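/- Let k be a field, p a prime, K = k(x,y), and z := y^p/x ∈ K. Let R₀ = k[x,y,z] be the k-subalgebra of K generated by x, y, z, and k[x⁻¹] the k-subalgebra generated by x⁻¹. Then (y^p · k[x⁻¹]) ∩ R₀ = k·z + k·xz (the k-linear span of z and xz = y^p). In particular, (y^p · k[x⁻¹]) ∩ R₀ ⊆ z·R₀. -/
import Mathlib


open MvPolynomial

/-- Let `k` be a field, `p` a prime, `K = k(x,y)`, `z = y^p/x` and
`R₀ = k[x,y,z]`.  Then `(y^p · k[x⁻¹]) ∩ R₀ = k·z + k·xz`, the `k`-linear span of `z` and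
`xz = y^p`.  In particular `(y^p · k[x⁻¹]) ∩ R₀ ⊆ z·R₀`. -/
theorem chart_intersection_constrains_sigma_z (k : Type*) [Field k] (p : ℕ) (hp : p.Prime)
    (K : Type*) [Field K] [Algebra (MvPolynomial (Fin 2) k) K]
    [IsFractionRing (MvPolynomial (Fin 2) k) K]
    [Algebra k K] [IsScalarTower k (MvPolynomial (Fin 2) k) K]
    (x y z : K)
    (hx : x = algebraMap (MvPolynomial (Fin 2) k) K (X 0))
    (hy : y = algebraMap (MvPolynomial (Fin 2) k) K (X 1))
    (hz : z = y ^ p / x)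
    (R₀ : Subalgebra k K)
    (hR₀ : R₀ = Algebra.adjoin k ({x, y, z} : Set K)) :
    {w : K | ∃ f ∈ Algebra.adjoin k ({x⁻¹} : Set K), w = y ^ p * f} ∩ (R₀ : Set K) =
      (Submodule.span k ({z, x * z} : Set K) : Set K) ∧
    {w : K | ∃ f ∈ Algebra.adjoin k ({x⁻¹} : Set K), w = y ^ p * f} ∩ (R₀ : Set K) ⊆
      {w : K | ∃ u ∈ R₀, w = z * u} := by
  have hinj : Function.Injective (algebraMap (MvPolynomial (Fin 2) k) K) :=
    IsFractionRing.injective _ _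
  have hx0 : x ≠ 0 := by
    rw [hx]
    intro h
    exact MvPolynomial.X_ne_zero 0 (hinj (by simp [h]))
  have hxz : x * z = y ^ p := by rw [hz]; field_simp
  have hzx : z = y ^ p * x⁻¹ := by rw [hz, div_eq_mul_inv]
  have hxR : x ∈ R₀ := hR₀ ▸ Algebra.subset_adjoin (by simp)
  have hzR : z ∈ R₀ := hR₀ ▸ Algebra.subset_adjoin (by simp)
  -- the monomial set spanning R₀
  set S : Set K := {w | ∃ a b c : ℕ, w = x ^ a * y ^ b * z ^ c} with hSdef
  have hone : (1:K) ∈ S := ⟨0,0,0, by simp⟩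
  have hSmul : ∀ u ∈ S, ∀ v ∈ S, u*v ∈ S := by
    rintro _ ⟨a,b,c,rfl⟩ _ ⟨a',b',c',rfl⟩
    exact ⟨a+a', b+b', c+c', by rw [pow_add, pow_add, pow_add]; ring⟩
  have hspanmul : ∀ u ∈ Submodule.span k S, ∀ v ∈ Submodule.span k S,
      u*v ∈ Submodule.span k S := by
    intro u hu v hv
    have h2 : u * v ∈ Submodule.span k S * Submodule.span k S := Submodule.mul_mem_mul hu hv
    rw [Submodule.span_mul_span] at h2
    refine Submodule.span_le.mpr ?_ h2
    rintro _ ⟨u', hu', v', hv', rfl⟩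
    exact Submodule.subset_span (hSmul u' hu' v' hv')
  have hR0span : (R₀ : Set K) ⊆ (Submodule.span k S : Set K) := by
    intro w hw
    rw [hR₀, SetLike.mem_coe] at hw
    induction hw using Algebra.adjoin_induction with
    | mem w hw =>
      refine Submodule.subset_span ?_
      rcases hw with rfl | rfl | rfl
      exacts [⟨1,0,0, by simp⟩, ⟨0,1,0, by simp⟩, ⟨0,0,1, by simp⟩]
    | algebraMap r =>
      rw [Algebra.algebraMap_eq_smul_one]
      exact Submodule.smul_mem _ _ (Submodule.subset_span hone)
    | add u v _ _ hu hv => exact Submodule.add_mem _ hu hv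
    | mul u v _ _ hu hv => exact hspanmul _ hu _ hv
  -- the hard inclusion
  have key : ∀ w : K, (∃ f ∈ Algebra.adjoin k ({x⁻¹} : Set K), w = y ^ p * f) →
      w ∈ Submodule.span k S → w ∈ Submodule.span k ({z, x * z} : Set K) := by
    rintro w ⟨f, hf, hwf⟩ hwS
    rw [Algebra.adjoin_singleton_eq_range_aeval, AlgHom.mem_range] at hf
    obtain ⟨q, rfl⟩ := hf
    obtain ⟨n, co, g, hsum⟩ := Submodule.mem_span_set'.mp hwS
    choose a b c hg using fun i => (g i).2
    set N : ℕ := q.natDegree + (Finset.univ.sup c) + 2 with hN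
    have hNq : q.natDegree ≤ N := by omega
    have hNc : ∀ i, c i ≤ N := fun i =>
      le_trans (Finset.le_sup (Finset.mem_univ i)) (by omega)
    have hq : y ^ p * Polynomial.aeval x⁻¹ q
        = ∑ i ∈ Finset.range (q.natDegree + 1), q.coeff i • (y ^ p * x⁻¹ ^ i) := by
      rw [Polynomial.aeval_eq_sum_range, Finset.mul_sum]
      exact Finset.sum_congr rfl fun i _ => (mul_smul_comm _ _ _)
    have hpowinv : ∀ m i : ℕ, i ≤ m → x ^ m * x⁻¹ ^ i = x ^ (m - i) := by
      intro m i him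
      have h1 : x ^ m = x ^ (m - i) * x ^ i := by rw [← pow_add]; congr 1; omega
      rw [h1, mul_assoc, ← mul_pow, mul_inv_cancel₀ hx0, one_pow, mul_one]
    have hterm1 : ∀ i : ℕ, i ≤ N → x ^ N * (y ^ p * x⁻¹ ^ i) = x ^ (N - i) * y ^ p := by
      intro i hi
      rw [show x ^ N * (y ^ p * x⁻¹ ^ i) = (x ^ N * x⁻¹ ^ i) * y ^ p by ring,
        hpowinv N i hi]
    have hterm2 : ∀ i : Fin n,
        x ^ N * (x ^ a i * y ^ b i * z ^ c i)
          = x ^ (N + a i - c i) * y ^ (b i + p * c i) := by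
      intro i
      have h1 : z ^ c i = y ^ (p * c i) * x⁻¹ ^ c i := by
        rw [hzx, mul_pow, ← pow_mul]
      rw [h1, show x ^ N * (x ^ a i * y ^ b i * (y ^ (p * c i) * x⁻¹ ^ c i))
          = x ^ N * x ^ a i * x⁻¹ ^ c i * (y ^ b i * y ^ (p * c i)) from by ring,
        ← pow_add x N (a i), hpowinv (N + a i) (c i) (by have := hNc i; omega),
        ← pow_add]
    -- two polynomial expressions for x^N * w
    set ι := IsScalarTower.toAlgHom k (MvPolynomial (Fin 2) k) K with hι
    have hιmon : ∀ u v : ℕ, ι (X 0 ^ u * X 1 ^ v) = x ^ u * y ^ v := by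
      intro u v
      rw [map_mul, map_pow, map_pow]
      simp only [hι, IsScalarTower.coe_toAlgHom', ← hx, ← hy]
    set L : MvPolynomial (Fin 2) k :=
      ∑ i ∈ Finset.range (q.natDegree + 1), q.coeff i • (X 0 ^ (N - i) * X 1 ^ p) with hL
    set R : MvPolynomial (Fin 2) k :=
      ∑ i : Fin n, co i • (X 0 ^ (N + a i - c i) * X 1 ^ (b i + p * c i)) with hR
    have hLval : ι L = x ^ N * w := by
      rw [hL, map_sum, hwf, hq, Finset.mul_sum]
      refine Finset.sum_congr rfl fun i hi => ?_
      rw [Finset.mem_range] at hi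
      rw [map_smul, hιmon, mul_smul_comm, hterm1 i (by omega)]
    have hRval : ι R = x ^ N * w := by
      rw [hR, map_sum, ← hsum, Finset.mul_sum]
      refine Finset.sum_congr rfl fun i _ => ?_
      rw [map_smul, hιmon, mul_smul_comm, hg i, hterm2 i]
    have hLR : L = R := by
      apply hinj
      have : (algebraMap (MvPolynomial (Fin 2) k) K) L = ι L := rfl
      rw [this, hLval]
      have : (algebraMap (MvPolynomial (Fin 2) k) K) R = ι R := rfl
      rw [this, hRval]
    -- extract coefficients
    have hdinj : ∀ u v u' v' : ℕ,
        (Finsupp.single (0:Fin 2) u + Finsupp.single (1:Fin 2) v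
          = Finsupp.single (0:Fin 2) u' + Finsupp.single (1:Fin 2) v') ↔ (u = u' ∧ v = v') := by
      intro u v u' v'
      constructor
      · intro h
        have h0 := DFunLike.congr_fun h 0
        have h1 := DFunLike.congr_fun h 1
        simp [Finsupp.single_apply] at h0 h1
        exact ⟨h0, h1⟩
      · rintro ⟨rfl, rfl⟩; rfl
    have hmc : ∀ u v u' v' : ℕ,
        coeff (Finsupp.single (0:Fin 2) u' + Finsupp.single (1:Fin 2) v')
          (X 0 ^ u * X 1 ^ v : MvPolynomial (Fin 2) k)
        = if u = u' ∧ v = v' then 1 else 0 := by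
      intro u v u' v'
      rw [X_pow_eq_monomial, X_pow_eq_monomial, monomial_mul, one_mul, coeff_monomial]
      by_cases h : u = u' ∧ v = v'
      · rw [if_pos ((hdinj _ _ _ _).mpr h), if_pos h]
      · rw [if_neg (fun hh => h ((hdinj _ _ _ _).mp hh)), if_neg h]
    have hcoeff : ∀ i : ℕ, 2 ≤ i → q.coeff i = 0 := by
      intro i hi2
      by_cases hiq : i ≤ q.natDegree
      swap
      · exact Polynomial.coeff_eq_zero_of_natDegree_lt (by omega)
      have hiN : i ≤ N := by omega
      have h := congrArg
        (coeff (Finsupp.single (0:Fin 2) (N - i) + Finsupp.single (1:Fin 2) p)) hLR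
      rw [hL, hR] at h
      rw [MvPolynomial.coeff_sum, MvPolynomial.coeff_sum] at h
      simp only [MvPolynomial.coeff_smul, hmc, smul_eq_mul, and_true] at h
      have hstep : ∀ j ∈ Finset.range (q.natDegree + 1),
          (q.coeff j * if N - j = N - i then (1:k) else 0)
            = if j = i then q.coeff j else 0 := by
        intro j hj
        rw [Finset.mem_range] at hj
        by_cases hji : j = i
        · subst hji; simp
        · rw [if_neg (fun hh => hji (by omega)), mul_zero, if_neg hji]
      have hLco : (∑ j ∈ Finset.range (q.natDegree + 1),
          q.coeff j * if N - j = N - i then (1:k) else 0) = q.coeff i := by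
        rw [Finset.sum_congr rfl hstep]
        exact (Finset.sum_ite_eq' _ i q.coeff).trans
          (if_pos (Finset.mem_range.mpr (by omega)))
      have hRco : ∑ j : Fin n,
          co j * (if N + a j - c j = N - i ∧ b j + p * c j = p then (1:k) else 0) = 0 := by
        refine Finset.sum_eq_zero fun j _ => ?_
        rw [if_neg, mul_zero]
        rintro ⟨h1, h2⟩
        have hp2 : 2 ≤ p := hp.two_le
        have hc1 : c j ≤ 1 := by
          by_contra hcj
          push_neg at hcj
          have := Nat.mul_le_mul_left p hcj
          omega
        have := hNc j
        omega
      rw [hLco, hRco] at h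
      exact h
    -- reconstruct w
    have hw2 : w = q.coeff 0 • (x * z) + q.coeff 1 • z := by
      have hext : ∑ i ∈ Finset.range (q.natDegree + 1), q.coeff i • (y ^ p * x⁻¹ ^ i)
          = ∑ i ∈ Finset.range (q.natDegree + 3), q.coeff i • (y ^ p * x⁻¹ ^ i) :=
        Finset.sum_subset (Finset.range_subset_range.mpr (by omega))
          (fun j _ hj => by
            rw [Finset.mem_range, not_lt] at hj
            rw [Polynomial.coeff_eq_zero_of_natDegree_lt (by omega), zero_smul])
      have hzero : ∑ j ∈ Finset.Ico 2 (q.natDegree + 3), q.coeff j • (y ^ p * x⁻¹ ^ j)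
          = 0 := Finset.sum_eq_zero (fun j hj => by
        rw [hcoeff j (Finset.mem_Ico.mp hj).1, zero_smul])
      rw [hwf, hq, hext, Finset.range_eq_Ico,
        ← Finset.sum_Ico_consecutive _ (show (0:ℕ) ≤ 2 by omega)
          (show 2 ≤ q.natDegree + 3 by omega),
        hzero, add_zero,
        ← Finset.range_eq_Ico, Finset.sum_range_succ, Finset.sum_range_one,
        pow_zero, mul_one, pow_one, ← hzx, ← hxz]
    exact Submodule.mem_span_pair.mpr ⟨q.coeff 1, q.coeff 0,
      by rw [hw2, add_comm]⟩
  -- easy inclusion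
  have easy : (Submodule.span k ({z, x * z} : Set K) : Set K) ⊆
      {w : K | ∃ f ∈ Algebra.adjoin k ({x⁻¹} : Set K), w = y ^ p * f} ∩ (R₀ : Set K) := by
    intro w hw
    rw [SetLike.mem_coe, Submodule.mem_span_pair] at hw
    obtain ⟨s, t, rfl⟩ := hw
    constructor
    · refine ⟨s • x⁻¹ + t • 1, ?_, ?_⟩
      · exact Subalgebra.add_mem _
          (Subalgebra.smul_mem _ (Algebra.subset_adjoin (Set.mem_singleton _)) s)
          (Subalgebra.smul_mem _ (one_mem _) t)
      · rw [mul_add, mul_smul_comm, mul_smul_comm, mul_one, ← hzx, hxz]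
    · exact add_mem (Subalgebra.smul_mem _ hzR s)
        (Subalgebra.smul_mem _ (mul_mem hxR hzR) t)
  have heq : {w : K | ∃ f ∈ Algebra.adjoin k ({x⁻¹} : Set K), w = y ^ p * f} ∩ (R₀ : Set K) =
      (Submodule.span k ({z, x * z} : Set K) : Set K) := by
    refine Set.Subset.antisymm ?_ easy
    rintro w ⟨⟨f, hf, hwf⟩, hwR⟩
    exact key w ⟨f, hf, hwf⟩ (hR0span hwR)
  refine ⟨heq, ?_⟩
  intro w hw
  rw [heq, SetLike.mem_coe, Submodule.mem_span_pair] at hw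
  obtain ⟨s, t, rfl⟩ := hw
  refine ⟨s • (1:K) + t • x, ?_, ?_⟩
  · exact add_mem (Subalgebra.smul_mem _ (one_mem _) s) (Subalgebra.smul_mem _ hxR t)
  · rw [mul_add, mul_smul_comm, mul_smul_comm, mul_one, mul_comm z x]
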